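/- arXiv:1510.04014 — 6 statements merged into one kernel-verified Lean document; each statement's English description precedes it below -/
import Mathlib

section
/- Let s : X → E be a section of π with local action function ρ_s, and let x₀ ∈ X be such that t ↦ ρ_s(x₀, t) is a group homomorphism T → G. Then ρ_s is constant along the T-orbit of x₀: for every u ∈ T and every t ∈ T one has ρ_s(u • x₀, t) = ρ_s(x₀, t). (Paper: the key algebraic step in the proof of the converse part of Lemma 2.3.) -/
/-- If t ↦ ρ_s(x₀,t) is a homomorphism, then ρ_s is constant along the
T-orbit of x₀ (key step in the converse part of Lemma 2.3). -/
theorem stmt_4 {T G X E : Type*} [Group T] [Group G]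
    (actX : T → X → X)
    (hX1 : ∀ x, actX 1 x = x)
    (hXmul : ∀ t u x, actX (t * u) x = actX t (actX u x))
    (actE : T → E → E)
    (hE1 : ∀ z, actE 1 z = z)
    (hEmul : ∀ t u z, actE (t * u) z = actE t (actE u z))
    (ract : E → G → E)
    (hG1 : ∀ z, ract z 1 = z)
    (hGmul : ∀ z g h, ract z (g * h) = ract (ract z g) h)
    (hcomm : ∀ t z g, actE t (ract z g) = ract (actE t z) g)
    (pr : E → X)
    (hpr : ∀ t z, pr (actE t z) = actX t (pr z))
    (hfib : ∀ z z', pr z = pr z' → ∃! g : G, z' = ract z g)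
    (s : X → E) (hs : ∀ x, pr (s x) = x)
    (ρ : X → T → G)
    (hρ : ∀ x t, actE t (s x) = ract (s (actX t x)) (ρ x t))
    (x₀ : X)
    (hhom : ∀ t u : T, ρ x₀ (t * u) = ρ x₀ t * ρ x₀ u) :
    ∀ u t : T, ρ (actX u x₀) t = ρ x₀ t := by
  intro u t
  have hfibeq : pr (s (actX (t * u) x₀)) = pr (actE (t * u) (s x₀)) := by
    rw [hs, hpr, hs]
  obtain ⟨g, _, hguniq⟩ := hfib (s (actX (t * u) x₀)) (actE (t * u) (s x₀)) hfibeq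
  have h1 : actE (t * u) (s x₀) = ract (s (actX (t * u) x₀)) (ρ x₀ (t * u)) := hρ x₀ (t * u)
  have h2 : actE (t * u) (s x₀)
      = ract (s (actX (t * u) x₀)) (ρ (actX u x₀) t * ρ x₀ u) := by
    rw [hEmul, hρ x₀ u, hcomm, hρ (actX u x₀) t, ← hGmul, ← hXmul]
  have := (hguniq _ h1).trans (hguniq _ h2).symm
  rw [hhom] at this
  exact (mul_right_cancel this).symm
end

section
/- Suppose in addition X is a topological space, G carries a Hausdorff topology, for each fixed t ∈ T the map x ↦ ρ_s(x, t) is continuous, and x₀ ∈ X is a point whose T-orbit {u • x₀ : u ∈ T} is dense in X. If t ↦ ρ_s(x₀, t) is a group homomorphism T → G, then ρ_s(x, t) = ρ_s(x₀, t) for all x ∈ X and t ∈ T, i.e. ρ_s is independent of the point x. (Paper: Lemma 2.3, converse part.) -/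
/-- Lemma 2.3, converse part: if ρ_s(x₀,·) is a homomorphism and the orbit of
x₀ is dense, then ρ_s is independent of the point. -/
theorem stmt_5 {T G X E : Type*} [Group T] [Group G]
    [TopologicalSpace X] [TopologicalSpace G] [T2Space G]
    (actX : T → X → X)
    (hX1 : ∀ x, actX 1 x = x)
    (hXmul : ∀ t u x, actX (t * u) x = actX t (actX u x))
    (actE : T → E → E)
    (hE1 : ∀ z, actE 1 z = z)
    (hEmul : ∀ t u z, actE (t * u) z = actE t (actE u z))
    (ract : E → G → E)
    (hG1 : ∀ z, ract z 1 = z)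
    (hGmul : ∀ z g h, ract z (g * h) = ract (ract z g) h)
    (hcomm : ∀ t z g, actE t (ract z g) = ract (actE t z) g)
    (pr : E → X)
    (hpr : ∀ t z, pr (actE t z) = actX t (pr z))
    (hfib : ∀ z z', pr z = pr z' → ∃! g : G, z' = ract z g)
    (s : X → E) (hs : ∀ x, pr (s x) = x)
    (ρ : X → T → G)
    (hρ : ∀ x t, actE t (s x) = ract (s (actX t x)) (ρ x t))
    (hcont : ∀ t : T, Continuous fun x => ρ x t)
    (x₀ : X)
    (hdense : Dense (Set.range fun u : T => actX u x₀))
    (hhom : ∀ t u : T, ρ x₀ (t * u) = ρ x₀ t * ρ x₀ u) :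
    ∀ x t, ρ x t = ρ x₀ t := by
  -- cocycle identity
  have cocycle : ∀ x t u, ρ x (t * u) = ρ (actX u x) t * ρ x u := by
    intro x t u
    obtain ⟨g, hg, hgu⟩ := hfib (s (actX (t * u) x)) (actE (t * u) (s x))
      (by rw [hpr, hs, hs])
    have h1 : ρ x (t * u) = g := hgu _ (hρ x (t * u))
    have h2 : ρ (actX u x) t * ρ x u = g := by
      refine hgu _ ?_
      show actE (t * u) (s x) = _
      rw [hEmul, hρ x u, hcomm, hρ (actX u x) t, ← hGmul, hXmul]
    rw [h1, h2]
  -- orbit invariance at x₀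
  have orbit : ∀ t u, ρ (actX u x₀) t = ρ x₀ t := by
    intro t u
    have := (cocycle x₀ t u).symm.trans (hhom t u)
    exact mul_right_cancel this
  intro x t
  have heq : (fun x => ρ x t) = fun _ : X => ρ x₀ t := by
    apply Continuous.ext_on hdense (hcont t) continuous_const
    rintro _ ⟨u, rfl⟩
    exact orbit t u
  exact congrFun heq x
end

section
/- Let H and K be groups and T = H × K. Suppose x₀ ∈ X is fixed by H × {1}, i.e. (h, 1) • x₀ = x₀ for all h ∈ H. Let s and s' be sections of π whose local action functions are independent of the point of X and factor through the projection to H, i.e. there are maps ρ, ρ' : T → G with ρ_s(x, t) = ρ(t), ρ_{s'}(x, t) = ρ'(t) for all x, t, and ρ(h, k) = ρ(h, 1), ρ'(h, k) = ρ'(h, 1) for all h ∈ H, k ∈ K. Let g ∈ G be the unique element with s'(x₀) = s(x₀) · g. Then ρ'(t) = g⁻¹ · ρ(t) · g for all t ∈ T. (Paper: Lemma 2.9, the homomorphisms induced by different distinguished sections are conjugate in G.) -/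
/-- Lemma 2.9: the homomorphisms induced by two distinguished sections are
conjugate in G, via the element g relating the sections at a point fixed by
H × {1}. -/
theorem stmt_8 {H K G X E : Type*} [Group H] [Group K] [Group G]
    (actX : H × K → X → X)
    (hX1 : ∀ x, actX 1 x = x)
    (hXmul : ∀ t u x, actX (t * u) x = actX t (actX u x))
    (actE : H × K → E → E)
    (hE1 : ∀ z, actE 1 z = z)
    (hEmul : ∀ t u z, actE (t * u) z = actE t (actE u z))
    (ract : E → G → E)
    (hG1 : ∀ z, ract z 1 = z)
    (hGmul : ∀ z g h, ract z (g * h) = ract (ract z g) h)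
    (hcomm : ∀ t z g, actE t (ract z g) = ract (actE t z) g)
    (pr : E → X)
    (hpr : ∀ t z, pr (actE t z) = actX t (pr z))
    (hfib : ∀ z z', pr z = pr z' → ∃! g : G, z' = ract z g)
    (x₀ : X) (hx₀ : ∀ h : H, actX (h, 1) x₀ = x₀)
    (s : X → E) (hs : ∀ x, pr (s x) = x)
    (ρ : H × K → G)
    (hρ : ∀ x t, actE t (s x) = ract (s (actX t x)) (ρ t))
    (hρfac : ∀ (h : H) (k : K), ρ (h, k) = ρ (h, 1))
    (s' : X → E) (hs'sec : ∀ x, pr (s' x) = x)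
    (ρ' : H × K → G)
    (hρ' : ∀ x t, actE t (s' x) = ract (s' (actX t x)) (ρ' t))
    (hρ'fac : ∀ (h : H) (k : K), ρ' (h, k) = ρ' (h, 1))
    (g : G) (hg : s' x₀ = ract (s x₀) g) :
    ∀ t : H × K, ρ' t = g⁻¹ * ρ t * g := by
  intro t
  obtain ⟨h, k⟩ := t
  rw [hρfac, hρ'fac]
  have hfiber : pr (s x₀) = pr (actE (h, 1) (s' x₀)) := by
    rw [hpr, hs'sec, hx₀, hs]
  obtain ⟨c, _, hu⟩ := hfib (s x₀) (actE (h, 1) (s' x₀)) hfiber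
  have e1 : actE (h, 1) (s' x₀) = ract (s x₀) (g * ρ' (h, 1)) := by
    rw [hρ' x₀ (h, 1), hx₀, hg, hGmul]
  have e2 : actE (h, 1) (s' x₀) = ract (s x₀) (ρ (h, 1) * g) := by
    rw [hg, hcomm, hρ x₀ (h, 1), hx₀, ← hGmul]
  have key : g * ρ' (h, 1) = ρ (h, 1) * g := (hu _ e1).trans (hu _ e2).symm
  rw [mul_assoc, ← key]
  group
end

section
/- Let T and G be topological groups and E a Hausdorff topological space carrying a continuous left T-action and a continuous right G-action that commute; suppose the right G-action is free (z · g = z implies g = 1), and let π : E → X be a map whose fibers are exactly the G-orbits. Fix e ∈ E whose combined orbit {t • (e · g) : t ∈ T, g ∈ G} is dense in E. Let Aut_T(E) denote the group, under composition, of all homeomorphisms Φ : E → E satisfying π ∘ Φ = π, Φ(t • z) = t • Φ(z), and Φ(z · g) = Φ(z) · g for all z, t, g. Then the map α : Aut_T(E) → G sending Φ to the unique g ∈ G with Φ(e) = e · g is an injective group homomorphism, and its image contains the center Z(G) of G. (Paper: Lemma 2.11, the automorphism group of an equivariant principal G-bundle is a subgroup of G containing Z(G).) -/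
/-- Lemma 2.11: the group of T-equivariant automorphisms of an equivariant
principal G-bundle embeds into G via evaluation at a point e with dense
combined orbit, and the image contains the center of G. -/
theorem stmt_9 {T G E X : Type*}
    [Group T] [TopologicalSpace T] [IsTopologicalGroup T]
    [Group G] [TopologicalSpace G] [IsTopologicalGroup G]
    [TopologicalSpace E] [T2Space E]
    (actE : T → E → E)
    (hE1 : ∀ z, actE 1 z = z)
    (hEmul : ∀ t u z, actE (t * u) z = actE t (actE u z))
    (hEcont : Continuous fun p : T × E => actE p.1 p.2)
    (ract : E → G → E)
    (hG1 : ∀ z, ract z 1 = z)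
    (hGmul : ∀ z g h, ract z (g * h) = ract (ract z g) h)
    (hGcont : Continuous fun p : E × G => ract p.1 p.2)
    (hcomm : ∀ t z g, actE t (ract z g) = ract (actE t z) g)
    (hfree : ∀ (z : E) (g : G), ract z g = z → g = 1)
    (pr : E → X)
    (hfib : ∀ z z', pr z = pr z' ↔ ∃ g : G, z' = ract z g)
    (e : E)
    (hdense : Dense {z : E | ∃ (t : T) (g : G), z = actE t (ract e g)}) :
    ∃ α : {Φ : E ≃ E // Continuous ⇑Φ ∧ Continuous ⇑Φ.symm ∧
        (∀ z, pr (Φ z) = pr z) ∧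
        (∀ t z, Φ (actE t z) = actE t (Φ z)) ∧
        (∀ z g, Φ (ract z g) = ract (Φ z) g)} → G,
      (∀ Φ, Φ.1 e = ract e (α Φ)) ∧
      Function.Injective α ∧
      (∀ Φ Ψ Ξ, (∀ z : E, Ξ.1 z = Φ.1 (Ψ.1 z)) → α Ξ = α Φ * α Ψ) ∧
      (∀ g ∈ Subgroup.center G, ∃ Φ, α Φ = g) := by
  -- uniqueness of translating element
  have huniq : ∀ a b : G, ract e a = ract e b → a = b := by
    intro a b h
    have : ract (ract e a) (a⁻¹ * b) = ract e a := by
      rw [← hGmul, mul_inv_cancel_left, ← h]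
    have h1 := hfree _ _ this
    exact inv_injective (eq_inv_of_mul_eq_one_left h1)
  have hex : ∀ Φ : {Φ : E ≃ E // Continuous ⇑Φ ∧ Continuous ⇑Φ.symm ∧
        (∀ z, pr (Φ z) = pr z) ∧
        (∀ t z, Φ (actE t z) = actE t (Φ z)) ∧
        (∀ z g, Φ (ract z g) = ract (Φ z) g)}, ∃ g : G, Φ.1 e = ract e g := by
    intro Φ
    exact (hfib e (Φ.1 e)).mp (Φ.2.2.2.1 e).symm
  refine ⟨fun Φ => Classical.choose (hex Φ), fun Φ => Classical.choose_spec (hex Φ),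
    ?_, ?_, ?_⟩
  · -- injectivity
    intro Φ Ψ h
    have h' : Classical.choose (hex Φ) = Classical.choose (hex Ψ) := h
    have he : Φ.1 e = Ψ.1 e := by
      rw [Classical.choose_spec (hex Φ), Classical.choose_spec (hex Ψ), h']
    have : (Φ.1 : E → E) = (Ψ.1 : E → E) := by
      refine Continuous.ext_on hdense Φ.2.1 Ψ.2.1 ?_
      rintro z ⟨t, g, rfl⟩
      rw [Φ.2.2.2.2.1, Ψ.2.2.2.2.1, Φ.2.2.2.2.2, Ψ.2.2.2.2.2, he]
    exact Subtype.ext (Equiv.coe_fn_injective this)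
  · -- multiplicativity
    intro Φ Ψ Ξ h
    apply huniq
    rw [← Classical.choose_spec (hex Ξ), h e, Classical.choose_spec (hex Ψ),
      Φ.2.2.2.2.2, Classical.choose_spec (hex Φ), ← hGmul]
  · -- center
    intro g hg
    have hgc : ∀ h : G, g * h = h * g := fun h =>
      (Subgroup.mem_center_iff.mp hg h).symm
    refine ⟨⟨⟨fun z => ract z g, fun z => ract z g⁻¹, ?_, ?_⟩, ?_, ?_, ?_, ?_, ?_⟩, ?_⟩
    · intro z; simp only; rw [← hGmul, mul_inv_cancel, hG1]
    · intro z; simp only; rw [← hGmul, inv_mul_cancel, hG1]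
    · exact hGcont.comp (continuous_id.prodMk continuous_const)
    · exact hGcont.comp (continuous_id.prodMk continuous_const)
    · intro z; exact ((hfib z _).mpr ⟨g, rfl⟩).symm
    · intro t z; exact (hcomm t z g).symm
    · intro z h; simp only [Equiv.coe_fn_mk]; rw [← hGmul, ← hGmul, hgc]
    · apply huniq
      exact (Classical.choose_spec (hex _)).symm
end

section
/- Let H and K be groups, T = H × K, A a set with a left H-action, and X = A × K with the T-action (h, k) • (a, k') = (h • a, k·k'). Let E carry commuting left T- and right G-actions and π : E → X be T-equivariant with G free and transitive on fibers. Suppose s₀ : A → E satisfies π(s₀(a)) = (a, 1) for all a ∈ A, and there is a map ρ : H → G with (h, 1) • s₀(a) = s₀(h • a) · ρ(h) for all h ∈ H, a ∈ A. Define s : X → E by s(a, k) = (1, k) • s₀(a). Then s is a section of π, and its local action function satisfies ρ_s((a, k'), (h, k)) = ρ(h) for all a ∈ A, k, k' ∈ K, h ∈ H; in particular ρ_s is independent of the point of X and factors through the projection T → H × {1}, i.e. s is a distinguished section. (Paper: the extension construction, equations (2.3)–(2.5), in the proof of Lemma 2.8.) -/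
/-- The extension construction (equations (2.3)–(2.5) in Lemma 2.8):
extending a section over A × {1} by the K-action produces a distinguished
section of the bundle over X = A × K. -/
theorem stmt_10 {H K G A E : Type*} [Group H] [Group K] [Group G]
    (actA : H → A → A)
    (hA1 : ∀ a, actA 1 a = a)
    (hAmul : ∀ h h' a, actA (h * h') a = actA h (actA h' a))
    (actE : H × K → E → E)
    (hE1 : ∀ z, actE 1 z = z)
    (hEmul : ∀ t u z, actE (t * u) z = actE t (actE u z))
    (ract : E → G → E)
    (hG1 : ∀ z, ract z 1 = z)
    (hGmul : ∀ z g g', ract z (g * g') = ract (ract z g) g')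
    (hcomm : ∀ t z g, actE t (ract z g) = ract (actE t z) g)
    (pr : E → A × K)
    (hpr : ∀ (t : H × K) (z : E),
      pr (actE t z) = (actA t.1 (pr z).1, t.2 * (pr z).2))
    (hfib : ∀ z z', pr z = pr z' → ∃! g : G, z' = ract z g)
    (s₀ : A → E) (hs₀ : ∀ a, pr (s₀ a) = (a, 1))
    (ρ : H → G)
    (hρ : ∀ (h : H) (a : A), actE (h, 1) (s₀ a) = ract (s₀ (actA h a)) (ρ h))
    (s : A × K → E) (hsdef : ∀ p : A × K, s p = actE (1, p.2) (s₀ p.1)) :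
    (∀ p : A × K, pr (s p) = p) ∧
      (∀ (a : A) (k' : K) (h : H) (k : K),
        actE (h, k) (s (a, k')) = ract (s (actA h a, k * k')) (ρ h)) := by
  constructor
  · intro p
    rw [hsdef, hpr, hs₀, hA1]
    simp
  · intro a k' h k
    rw [hsdef, hsdef, ← hEmul]
    have h1 : (h, k) * ((1 : H), k') = ((1 : H), k * k') * (h, (1 : K)) := by
      simp [Prod.ext_iff]
    rw [h1, hEmul, hρ, hcomm]
end

section
/- Let F be a field, r ≥ 1, and P an r × r matrix over F with det P ≠ 0. Let S be a set and let a, b : S → (Fin r → ℤ) be families of integer vectors such that: (i) for every η ∈ S and all indices i, j, if P_{ij} ≠ 0 then a_η(i) ≥ b_η(j); and (ii) for every η ∈ S, ∑_{i} a_η(i) = ∑_{i} b_η(i). Then there exists a single permutation γ of {1, …, r} such that a_η(i) = b_η(γ(i)) for every η ∈ S and every i. (Paper: Lemma 4.4, the combinatorial core: with a_η(i) = η(ξ^τ_i) and b_η(j) = η(ξ^σ_j), there is a permutation γ with η(ξ^τ_i) = η(ξ^σ_{γ(i)}) for all η ∈ σ ∩ τ ∩ Ξ(1).) -/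
/-- Lemma 4.4 (combinatorial core): if P is invertible, P_{ij} ≠ 0 forces
a_η(i) ≥ b_η(j), and the total sums agree for each η, then a single
permutation γ matches a_η(i) with b_η(γ(i)) for all η and i. -/
theorem stmt_11 {F : Type*} [Field F] (r : ℕ) (hr : 1 ≤ r)
    (P : Matrix (Fin r) (Fin r) F) (hP : P.det ≠ 0)
    {S : Type*} (a b : S → Fin r → ℤ)
    (h1 : ∀ (η : S) (i j : Fin r), P i j ≠ 0 → b η j ≤ a η i)
    (h2 : ∀ η : S, ∑ i, a η i = ∑ i, b η i) :
    ∃ γ : Equiv.Perm (Fin r), ∀ (η : S) (i : Fin r), a η i = b η (γ i) := by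
  -- find a permutation σ with P i (σ i) ≠ 0 for all i
  have hσ : ∃ σ : Equiv.Perm (Fin r), ∀ i, P i (σ i) ≠ 0 := by
    by_contra h
    push_neg at h
    apply hP
    rw [Matrix.det_apply]
    refine Finset.sum_eq_zero fun σ _ => ?_
    obtain ⟨i, hi⟩ := h σ⁻¹
    have : ∏ j, P (σ j) j = 0 := by
      apply Finset.prod_eq_zero (Finset.mem_univ (σ⁻¹ i))
      simpa using hi
    simp [this]
  obtain ⟨σ, hσ⟩ := hσ
  refine ⟨σ, fun η i => ?_⟩
  have hle : ∀ i, b η (σ i) ≤ a η i := fun i => h1 η i (σ i) (hσ i)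
  have hsum : ∑ i, b η (σ i) = ∑ i, a η i := by
    rw [h2 η, Equiv.sum_comp σ (b η)]
  exact ((Finset.sum_eq_sum_iff_of_le fun i _ => hle i).mp hsum i
    (Finset.mem_univ i)).symm
end
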